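/- If the tuple of exponents in the Cartan decomposition is computed with respect to two different uniformisers, it is the same: let R be a discrete valuation ring with fraction field K, let ϖ and ϖ' be two uniformisers of R, and let f, f' : Fin n → ℤ be antitone functions such that k₁·diag(ϖ^f)·k₂ = k₁'·diag(ϖ'^{f'})·k₂' in GL_n(K) for some k₁, k₂, k₁', k₂' ∈ GL_n(R). Then f = f'. -/

import Mathlib

open Matrix

/-- The diagonal matrix over `K` with `i`-th diagonal entry `ϖ ^ f i`, for `f : Fin n → ℤ`. -/
noncomputable def cartanDiag {R : Type*} [CommRing R] {K : Type*} [Field K] [Algebra R K]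
    (ϖ : R) {n : ℕ} (f : Fin n → ℤ) : Matrix (Fin n) (Fin n) K :=
  Matrix.diagonal fun i => (algebraMap R K ϖ) ^ (f i)

namespace CartanAux

variable (R : Type*) {K : Type*} [CommRing R] [Field K] [Algebra R K]
variable {n : ℕ}

/-- The `R`-span of the `j×j` minors of a matrix over `K`. -/
noncomputable def minorSpan (j : ℕ) (A : Matrix (Fin n) (Fin n) K) : Submodule R K :=
  Submodule.span R (Set.range fun st : (Fin j → Fin n) × (Fin j → Fin n) =>
    (A.submatrix st.1 st.2).det)

lemma det_submatrix_mem (j : ℕ) (A : Matrix (Fin n) (Fin n) K) (s t : Fin j → Fin n) :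
    (A.submatrix s t).det ∈ minorSpan R j A :=
  Submodule.subset_span ⟨(s, t), rfl⟩

lemma minorSpan_map_mul_le (j : ℕ) (B : Matrix (Fin n) (Fin n) R)
    (A : Matrix (Fin n) (Fin n) K) :
    minorSpan R j (B.map (algebraMap R K) * A) ≤ minorSpan R j A := by
  rw [minorSpan, Submodule.span_le]
  rintro x ⟨⟨s, t⟩, rfl⟩
  have hdet : ((B.map (algebraMap R K) * A).submatrix s t).det
      = ∑ u : Fin j → Fin n,
          (∏ k, algebraMap R K (B (s k) (u k))) • (A.submatrix u t).det := by
    have h1 : ((B.map (algebraMap R K) * A).submatrix s t) =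
        Matrix.of fun k => ∑ i : Fin n,
          (algebraMap R K (B (s k) i)) • (fun l => A i (t l)) := by
      ext k l
      simp [Matrix.mul_apply, Finset.sum_apply, Matrix.map_apply, Algebra.smul_def]
    rw [h1]
    show (Matrix.detRowAlternating (R := K) (n := Fin j)).toMultilinearMap
        (fun k => ∑ i : Fin n, (algebraMap R K (B (s k) i)) • (fun l => A i (t l))) = _
    rw [MultilinearMap.map_sum]
    refine Finset.sum_congr rfl fun u _ => ?_
    exact (Matrix.detRowAlternating (R := K) (n := Fin j)).toMultilinearMap.map_smul_univ
      (fun k => algebraMap R K (B (s k) (u k))) (fun k l => A (u k) (t l))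
  show ((B.map (algebraMap R K) * A).submatrix s t).det ∈ minorSpan R j A
  rw [hdet]
  refine Submodule.sum_mem _ fun u _ => ?_
  rw [← map_prod, smul_eq_mul, ← Algebra.smul_def]
  exact Submodule.smul_mem _ _ (det_submatrix_mem R j A u t)
lemma minorSpan_transpose (j : ℕ) (A : Matrix (Fin n) (Fin n) K) :
    minorSpan R j Aᵀ = minorSpan R j A := by
  have key : ∀ (M : Matrix (Fin n) (Fin n) K),
      minorSpan R j Mᵀ ≤ minorSpan R j M := by
    intro M
    rw [minorSpan, Submodule.span_le]
    rintro x ⟨⟨s, t⟩, rfl⟩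
    show ((Mᵀ).submatrix s t).det ∈ minorSpan R j M
    rw [← Matrix.transpose_submatrix, Matrix.det_transpose]
    exact det_submatrix_mem R j M t s
  refine le_antisymm (key A) ?_
  have := key Aᵀ
  rwa [Matrix.transpose_transpose] at this

lemma minorSpan_mul_map_le (j : ℕ) (A : Matrix (Fin n) (Fin n) K)
    (B : Matrix (Fin n) (Fin n) R) :
    minorSpan R j (A * B.map (algebraMap R K)) ≤ minorSpan R j A := by
  rw [← minorSpan_transpose R j (A * B.map (algebraMap R K)),
    ← minorSpan_transpose R j A]
  rw [Matrix.transpose_mul, ← Matrix.transpose_map]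
  exact minorSpan_map_mul_le R j Bᵀ Aᵀ

lemma minorSpan_units (j : ℕ) (g₁ g₂ : GL (Fin n) R) (A : Matrix (Fin n) (Fin n) K) :
    minorSpan R j ((g₁ : Matrix (Fin n) (Fin n) R).map (algebraMap R K) * A *
      (g₂ : Matrix (Fin n) (Fin n) R).map (algebraMap R K)) = minorSpan R j A := by
  set φ := algebraMap R K
  refine le_antisymm ?_ ?_
  · exact le_trans (minorSpan_mul_map_le R j _ _) (minorSpan_map_mul_le R j _ _)
  · have hA : A = (g₁⁻¹ : GL (Fin n) R).val.map φ *
        ((g₁ : Matrix (Fin n) (Fin n) R).map φ * A *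
          (g₂ : Matrix (Fin n) (Fin n) R).map φ) * (g₂⁻¹ : GL (Fin n) R).val.map φ := by
      have h1 : (g₁⁻¹ : GL (Fin n) R).val.map φ * (g₁ : Matrix (Fin n) (Fin n) R).map φ = 1 := by
        rw [← Matrix.map_mul]
        simp [Units.inv_mul, φ]
      have h2 : (g₂ : Matrix (Fin n) (Fin n) R).map φ * (g₂⁻¹ : GL (Fin n) R).val.map φ = 1 := by
        rw [← Matrix.map_mul]
        simp [Units.mul_inv, φ]
      symm
      calc (g₁⁻¹ : GL (Fin n) R).val.map φ *
            ((g₁ : Matrix (Fin n) (Fin n) R).map φ * A *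
              (g₂ : Matrix (Fin n) (Fin n) R).map φ) * (g₂⁻¹ : GL (Fin n) R).val.map φ
          = ((g₁⁻¹ : GL (Fin n) R).val.map φ * (g₁ : Matrix (Fin n) (Fin n) R).map φ) * A *
            ((g₂ : Matrix (Fin n) (Fin n) R).map φ * (g₂⁻¹ : GL (Fin n) R).val.map φ) := by
            simp only [mul_assoc]
        _ = A := by rw [h1, h2, one_mul, mul_one]
    nth_rewrite 1 [hA]
    exact le_trans (minorSpan_mul_map_le R j _ _) (minorSpan_map_mul_le R j _ _)
lemma zpow_finset_sum {ι : Type*} {x : K} (hx : x ≠ 0) (s : Finset ι) (a : ι → ℤ) :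
    x ^ (∑ i ∈ s, a i) = ∏ i ∈ s, x ^ a i := by
  classical
  induction s using Finset.induction_on with
  | empty => simp
  | @insert i s his ih => rw [Finset.sum_insert his, Finset.prod_insert his, zpow_add₀ hx, ih]

lemma fin_strictMono_le {j m : ℕ} {g : Fin j → Fin m} (hg : StrictMono g) (k : Fin j) :
    (k : ℕ) ≤ (g k : ℕ) := by
  suffices H : ∀ (i : ℕ) (hi : i < j), i ≤ (g ⟨i, hi⟩ : ℕ) by
    have := H k k.2; simpa using this
  intro i
  induction i with
  | zero => intro hi; exact Nat.zero_le _
  | succ m ih =>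
    intro hi
    have h1 := ih (by omega)
    have h2 : g ⟨m, by omega⟩ < g ⟨m + 1, hi⟩ := hg (by simp [Fin.lt_def])
    rw [Fin.lt_def] at h2
    omega

/-- the sum of `f` over the last `j` indices -/
def expSum {n : ℕ} (f : Fin n → ℤ) (j : ℕ) : ℤ :=
  ∑ i : Fin n, if n ≤ (i : ℕ) + j then f i else 0

lemma expSum_eq {n : ℕ} (f : Fin n → ℤ) {j : ℕ} (hj : j ≤ n) :
    expSum f j = ∑ k : Fin j, f ⟨n - j + (k : ℕ), by omega⟩ := by
  classical
  have himg : Finset.image (fun k : Fin j => (⟨n - j + (k : ℕ), by omega⟩ : Fin n)) Finset.univ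
      = Finset.univ.filter (fun i : Fin n => n ≤ (i : ℕ) + j) := by
    ext i
    simp only [Finset.mem_image, Finset.mem_univ, true_and, Finset.mem_filter]
    constructor
    · rintro ⟨k, rfl⟩
      simp only []
      omega
    · intro hi
      refine ⟨⟨(i : ℕ) - (n - j), by omega⟩, ?_⟩
      ext
      simp only []
      omega
  rw [expSum, ← Finset.sum_filter, ← himg,
    Finset.sum_image (fun a _ b _ hab => by
      have : n - j + (a : ℕ) = n - j + (b : ℕ) := congrArg Fin.val hab
      exact Fin.ext (by omega))]

lemma expSum_le_sum {n j : ℕ} (hj : j ≤ n) {f : Fin n → ℤ} (hf : Antitone f)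
    {s : Fin j → Fin n} (hs : Function.Injective s) :
    expSum f j ≤ ∑ k, f (s k) := by
  classical
  rw [expSum_eq f hj]
  set T : Finset (Fin n) := Finset.image s Finset.univ with hT
  have hcard : T.card = j := by
    rw [hT, Finset.card_image_of_injective _ hs, Finset.card_univ, Fintype.card_fin]
  set v := T.orderEmbOfFin hcard with hv
  have hsum1 : ∑ k, f (s k) = ∑ i ∈ T, f i :=
    (Finset.sum_image (fun a _ b _ hab => hs hab)).symm
  have himg : Finset.image v Finset.univ = T := by
    apply Finset.coe_injective
    rw [Finset.coe_image, Finset.coe_univ, Set.image_univ]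
    exact Finset.range_orderEmbOfFin T hcard
  have hsum2 : ∑ i ∈ T, f i = ∑ k, f (v k) := by
    rw [← himg, Finset.sum_image (fun a _ b _ hab => v.injective hab)]
  rw [hsum1, hsum2]
  refine Finset.sum_le_sum fun k _ => ?_
  refine hf ?_
  have hw : StrictMono (fun k : Fin j => (v k.rev).rev) := by
    intro a b hab
    have h2 : v b.rev < v a.rev := v.strictMono (by rwa [Fin.rev_lt_rev])
    exact Fin.rev_lt_rev.mpr h2
  have h1 := fin_strictMono_le hw k.rev
  rw [Fin.rev_rev] at h1
  simp only [Fin.val_rev] at h1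
  have hk := k.is_lt
  have hvk := (v k).is_lt
  rw [Fin.le_def]
  simp only []
  omega

lemma minorSpan_cartanDiag {n : ℕ} (ϖ : R) (hϖ0 : algebraMap R K ϖ ≠ 0)
    {f : Fin n → ℤ} (hf : Antitone f) {j : ℕ} (hj : j ≤ n) :
    minorSpan R j (cartanDiag (K := K) ϖ f)
      = Submodule.span R {(algebraMap R K ϖ) ^ expSum f j} := by
  classical
  set x := algebraMap R K ϖ with hxdef
  have hmem : ∀ m : ℤ, expSum f j ≤ m →
      x ^ m ∈ Submodule.span R {x ^ expSum f j} := by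
    intro m hm
    have hx : x ^ m = ϖ ^ (m - expSum f j).toNat • x ^ expSum f j := by
      rw [Algebra.smul_def, map_pow, ← hxdef, ← zpow_natCast x, Int.toNat_of_nonneg (by omega),
        ← zpow_add₀ hϖ0]
      congr 1
      omega
    rw [hx]
    exact Submodule.smul_mem _ _ (Submodule.mem_span_singleton_self _)
  refine le_antisymm ?_ ?_
  · rw [minorSpan, Submodule.span_le]
    rintro z ⟨⟨s, t⟩, rfl⟩
    show ((cartanDiag (K := K) ϖ f).submatrix s t).det ∈ _
    by_cases hs : Function.Injective s
    · rw [Matrix.det_apply]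
      refine Submodule.sum_mem _ fun σ _ => ?_
      have hprod : (∏ i, (cartanDiag (K := K) ϖ f).submatrix s t (σ i) i)
          ∈ Submodule.span R {x ^ expSum f j} := by
        by_cases hall : ∀ i, s (σ i) = t i
        · have hpe : ∏ i, (cartanDiag (K := K) ϖ f).submatrix s t (σ i) i
              = x ^ (∑ i, f (s (σ i))) := by
            rw [zpow_finset_sum hϖ0]
            refine Finset.prod_congr rfl fun i _ => ?_
            rw [Matrix.submatrix_apply, cartanDiag, hall i, Matrix.diagonal_apply_eq, ← hall i]
          rw [hpe]
          refine hmem _ ?_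
          have hre : ∑ i, f (s (σ i)) = ∑ i, f (s i) :=
            Equiv.sum_comp σ (fun i => f (s i))
          rw [hre]
          exact expSum_le_sum hj hf hs
        · push_neg at hall
          obtain ⟨i0, hi0⟩ := hall
          have hz : ∏ i, (cartanDiag (K := K) ϖ f).submatrix s t (σ i) i = 0 :=
            Finset.prod_eq_zero (Finset.mem_univ i0)
              (by simp [cartanDiag, Matrix.submatrix_apply, Matrix.diagonal_apply_ne _ hi0])
          rw [hz]
          exact Submodule.zero_mem _
      rcases Int.units_eq_one_or (Equiv.Perm.sign σ) with hsgn | hsgn <;> rw [hsgn]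
      · rwa [one_smul]
      · rw [Units.smul_def, Units.val_neg, Units.val_one, neg_smul, one_smul]
        exact Submodule.neg_mem _ hprod
    · rw [Function.not_injective_iff] at hs
      obtain ⟨a, b, hab, hne⟩ := hs
      have hz : ((cartanDiag (K := K) ϖ f).submatrix s t).det = 0 :=
        Matrix.det_zero_of_row_eq hne (by
          ext l
          simp only [Matrix.submatrix_apply, hab])
      rw [hz]
      exact Submodule.zero_mem _
  · rw [Submodule.span_le, Set.singleton_subset_iff]
    let e : Fin j → Fin n := fun k => ⟨n - j + (k : ℕ), by omega⟩
    have he : Function.Injective e := fun a b hab => by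
      have : n - j + (a : ℕ) = n - j + (b : ℕ) := congrArg Fin.val hab
      exact Fin.ext (by omega)
    have hsub : (cartanDiag (K := K) ϖ f).submatrix e e
        = Matrix.diagonal fun k => x ^ f (e k) := by
      rw [cartanDiag, Matrix.submatrix_diagonal _ _ he]
      rfl
    have hx : (x : K) ^ expSum f j = ((cartanDiag (K := K) ϖ f).submatrix e e).det := by
      rw [hsub, Matrix.det_diagonal, expSum_eq f hj, zpow_finset_sum hϖ0]
    rw [SetLike.mem_coe, hx]
    exact det_submatrix_mem R j _ e e

lemma span_zpow_inj [IsDomain R] (inj : Function.Injective (algebraMap R K))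
    {ϖ : R} (hϖ : Irreducible ϖ) {a b : ℤ}
    (h : Submodule.span R {(algebraMap R K ϖ) ^ a}
        = Submodule.span R {(algebraMap R K ϖ) ^ b}) :
    a = b := by
  set x := algebraMap R K ϖ with hxdef
  have hx0 : x ≠ 0 := by
    intro h0
    exact hϖ.ne_zero (inj (by rw [← hxdef, h0, map_zero]))
  obtain ⟨r, hr⟩ : ∃ r : R, r • x ^ b = x ^ a := by
    have : x ^ a ∈ Submodule.span R {x ^ b} := h ▸ Submodule.mem_span_singleton_self _
    exact Submodule.mem_span_singleton.mp this
  obtain ⟨r', hr'⟩ : ∃ r' : R, r' • x ^ a = x ^ b := by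
    have : x ^ b ∈ Submodule.span R {x ^ a} := h ▸ Submodule.mem_span_singleton_self _
    exact Submodule.mem_span_singleton.mp this
  rw [Algebra.smul_def] at hr hr'
  have hrr' : r * r' = 1 := by
    apply inj
    rw [_root_.map_mul, _root_.map_one]
    have hb : x ^ b ≠ 0 := zpow_ne_zero _ hx0
    have ha : x ^ a ≠ 0 := zpow_ne_zero _ hx0
    refine mul_right_cancel₀ (mul_ne_zero hb ha) ?_
    calc algebraMap R K r * algebraMap R K r' * (x ^ b * x ^ a)
        = (algebraMap R K r * x ^ b) * (algebraMap R K r' * x ^ a) := by ring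
      _ = x ^ a * x ^ b := by rw [hr, hr']
      _ = 1 * (x ^ b * x ^ a) := by ring
  have key : ∀ (c d : ℤ) (w : R), c < d → algebraMap R K w * x ^ d = x ^ c → ¬ IsUnit w := by
    intro c d w hcd hw hunit
    have h1 : algebraMap R K w = x ^ (c - d) := by
      have hd : x ^ d ≠ 0 := zpow_ne_zero _ hx0
      rw [zpow_sub₀ hx0]
      field_simp
      linear_combination hw
    have h2 : algebraMap R K (w * ϖ ^ (d - c).toNat) = 1 := by
      rw [_root_.map_mul, h1, _root_.map_pow, ← hxdef, ← zpow_natCast x, Int.toNat_of_nonneg (by omega),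
        ← zpow_add₀ hx0]
      norm_num
    have h3 : w * ϖ ^ (d - c).toNat = 1 := by
      apply inj
      rw [h2, _root_.map_one]
    have h4 : IsUnit (ϖ ^ (d - c).toNat) := IsUnit.of_mul_eq_one _ (by rw [mul_comm] at h3; exact h3)
    have h5 : (d - c).toNat ≠ 0 := by omega
    exact hϖ.not_isUnit ((isUnit_pow_iff h5).mp h4)
  rcases lt_trichotomy a b with hab | hab | hab
  · exact absurd (IsUnit.of_mul_eq_one _ hrr') (key a b r hab hr)
  · exact hab
  · exact absurd (IsUnit.of_mul_eq_one _ (by rw [mul_comm] at hrr'; exact hrr'))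
      (key b a r' hab hr')

end CartanAux

/-- The tuple of exponents in the Cartan decomposition does not depend on the
choice of uniformiser: if `ϖ, ϖ'` are uniformisers of a discrete valuation ring `R` with
fraction field `K`, `f, f' : Fin n → ℤ` are antitone, and
`k₁ * diag (ϖ ^ f) * k₂ = k₁' * diag (ϖ' ^ f') * k₂'` in `GLₙ(K)` for some
`k₁, k₂, k₁', k₂' ∈ GLₙ(R)`, then `f = f'`. -/
theorem cartan_decomposition_uniformiser_independent {R : Type*} [CommRing R] [IsDomain R]
    [IsDiscreteValuationRing R] {K : Type*} [Field K] [Algebra R K] [IsFractionRing R K]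
    (ϖ ϖ' : R) (hϖ : Irreducible ϖ) (hϖ' : Irreducible ϖ') {n : ℕ}
    {k₁ k₂ k₁' k₂' : GL (Fin n) R} {f f' : Fin n → ℤ}
    (hf : Antitone f) (hf' : Antitone f')
    (h : (((Matrix.GeneralLinearGroup.map (n := Fin n) (algebraMap R K)) k₁ :
            Matrix (Fin n) (Fin n) K)) * cartanDiag ϖ f *
          ((Matrix.GeneralLinearGroup.map (n := Fin n) (algebraMap R K)) k₂ :
            Matrix (Fin n) (Fin n) K) =
        (((Matrix.GeneralLinearGroup.map (n := Fin n) (algebraMap R K)) k₁' :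
            Matrix (Fin n) (Fin n) K)) * cartanDiag ϖ' f' *
          ((Matrix.GeneralLinearGroup.map (n := Fin n) (algebraMap R K)) k₂' :
            Matrix (Fin n) (Fin n) K)) :
    f = f' := by
  classical
  have inj : Function.Injective (algebraMap R K) := IsFractionRing.injective R K
  have hϖ0 : algebraMap R K ϖ ≠ 0 := fun h0 => hϖ.ne_zero (inj (by rw [h0, map_zero]))
  obtain ⟨u, hu⟩ := IsDiscreteValuationRing.associated_of_irreducible R hϖ hϖ'
  have hzpow : ∀ m : ℤ, algebraMap R K ((u ^ m : Rˣ) : R)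
      = (algebraMap R K (u : R)) ^ m := by
    intro m
    calc algebraMap R K ((u ^ m : Rˣ) : R)
        = ((Units.map (algebraMap R K).toMonoidHom (u ^ m) : Kˣ) : K) :=
          (Units.coe_map _ _).symm
      _ = (((Units.map (algebraMap R K).toMonoidHom u) ^ m : Kˣ) : K) := by
          rw [map_zpow]
      _ = ((Units.map (algebraMap R K).toMonoidHom u : Kˣ) : K) ^ m :=
          Units.val_zpow_eq_zpow_val _ _
      _ = (algebraMap R K (u : R)) ^ m := by
          rw [Units.coe_map]
          rfl
  -- the diagonal unit matrix
  have hprodd : ∀ (a b : Fin n → ℤ),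
      (Matrix.diagonal fun i => ((u ^ a i : Rˣ) : R)) *
        (Matrix.diagonal fun i => ((u ^ b i : Rˣ) : R))
      = Matrix.diagonal fun i => ((u ^ (a i + b i) : Rˣ) : R) := by
    intro a b
    rw [Matrix.diagonal_mul_diagonal]
    exact congrArg Matrix.diagonal (funext fun i => by rw [← Units.val_mul, ← _root_.zpow_add])
  have h1 : (Matrix.diagonal fun i => ((u ^ f' i : Rˣ) : R)) *
      (Matrix.diagonal fun i => ((u ^ (-f' i) : Rˣ) : R)) = 1 := by
    rw [hprodd]
    simp
  have h2 : (Matrix.diagonal fun i => ((u ^ (-f' i) : Rˣ) : R)) *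
      (Matrix.diagonal fun i => ((u ^ f' i : Rˣ) : R)) = 1 := by
    rw [hprodd]
    simp
  let gd : GL (Fin n) R := ⟨Matrix.diagonal fun i => ((u ^ f' i : Rˣ) : R),
    Matrix.diagonal fun i => ((u ^ (-f' i) : Rˣ) : R), h1, h2⟩
  have hdmmap : (Matrix.diagonal fun i => ((u ^ f' i : Rˣ) : R)).map (algebraMap R K)
      = Matrix.diagonal fun i => (algebraMap R K (u : R)) ^ (f' i) := by
    rw [Matrix.diagonal_map (map_zero _)]
    exact congrArg Matrix.diagonal (funext fun i => hzpow (f' i))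
  have hdiag : cartanDiag (K := K) ϖ' f' = cartanDiag (K := K) ϖ f' *
      ((gd : Matrix (Fin n) (Fin n) R).map (algebraMap R K)) := by
    show _ = _ * ((Matrix.diagonal fun i => ((u ^ f' i : Rˣ) : R)).map (algebraMap R K))
    rw [hdmmap, cartanDiag, cartanDiag, Matrix.diagonal_mul_diagonal]
    exact congrArg Matrix.diagonal (funext fun i => by
      rw [← mul_zpow, ← _root_.map_mul, hu])
  have hspan : ∀ j : ℕ, j ≤ n → CartanAux.expSum f j = CartanAux.expSum f' j := by
    intro j hj
    apply CartanAux.span_zpow_inj R inj hϖ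
    calc Submodule.span R {(algebraMap R K ϖ) ^ CartanAux.expSum f j}
        = CartanAux.minorSpan R j ((k₁ : Matrix (Fin n) (Fin n) R).map (algebraMap R K) *
            cartanDiag ϖ f * (k₂ : Matrix (Fin n) (Fin n) R).map (algebraMap R K)) := by
          rw [CartanAux.minorSpan_units R j k₁ k₂ (cartanDiag ϖ f),
            CartanAux.minorSpan_cartanDiag R ϖ hϖ0 hf hj]
      _ = CartanAux.minorSpan R j ((k₁' : Matrix (Fin n) (Fin n) R).map (algebraMap R K) *
            cartanDiag ϖ' f' * (k₂' : Matrix (Fin n) (Fin n) R).map (algebraMap R K)) := by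
          exact congrArg _ h
      _ = CartanAux.minorSpan R j ((k₁' : Matrix (Fin n) (Fin n) R).map (algebraMap R K) *
            cartanDiag ϖ f' *
            (((gd * k₂' : GL (Fin n) R) : Matrix (Fin n) (Fin n) R)).map (algebraMap R K)) := by
          have heq : (k₁' : Matrix (Fin n) (Fin n) R).map (algebraMap R K) *
              cartanDiag ϖ' f' * (k₂' : Matrix (Fin n) (Fin n) R).map (algebraMap R K)
              = (k₁' : Matrix (Fin n) (Fin n) R).map (algebraMap R K) *
                cartanDiag ϖ f' *
                (((gd * k₂' : GL (Fin n) R) : Matrix (Fin n) (Fin n) R)).map (algebraMap R K) := by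
            rw [hdiag, Units.val_mul, Matrix.map_mul]
            simp only [mul_assoc]
          rw [heq]
      _ = Submodule.span R {(algebraMap R K ϖ) ^ CartanAux.expSum f' j} := by
          rw [CartanAux.minorSpan_units R j k₁' (gd * k₂') (cartanDiag ϖ f'),
            CartanAux.minorSpan_cartanDiag R ϖ hϖ0 hf' hj]
  have hkey : ∀ (g : Fin n → ℤ) (i : Fin n),
      CartanAux.expSum g (n - (i : ℕ)) - CartanAux.expSum g (n - (i : ℕ) - 1) = g i := by
    intro g i
    rw [CartanAux.expSum, CartanAux.expSum, ← Finset.sum_sub_distrib]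
    have hpt : ∀ x : Fin n,
        ((if n ≤ (x : ℕ) + (n - (i : ℕ)) then g x else 0) -
          (if n ≤ (x : ℕ) + (n - (i : ℕ) - 1) then g x else 0)) =
        if x = i then g x else 0 := by
      intro x
      have hx := x.is_lt
      have hi := i.is_lt
      by_cases hxi : x = i
      · subst hxi
        rw [if_pos rfl, if_pos (by omega), if_neg (by omega), sub_zero]
      · rw [if_neg hxi]
        have hne : (x : ℕ) ≠ (i : ℕ) := fun hh => hxi (Fin.ext hh)
        by_cases hc : n ≤ (x : ℕ) + (n - (i : ℕ))
        · rw [if_pos hc, if_pos (by omega), sub_self]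
        · rw [if_neg hc, if_neg (by omega), sub_zero]
    rw [Finset.sum_congr rfl fun x _ => hpt x, Finset.sum_ite_eq' Finset.univ i g,
      if_pos (Finset.mem_univ i)]
  funext i
  have e1 := hkey f i
  have e2 := hkey f' i
  rw [hspan (n - (i : ℕ)) (by omega), hspan (n - (i : ℕ) - 1) (by omega)] at e1
  omega
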